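/- Let (X_n, A_n, β_n)_{n≥0} be a Local Learning Process in Model 2 whose jump laws μ_r and μ_g are supported on {e_1, −e_1, e_2, −e_2}. Let q = φ(r | β_0(x, ·)) be the (state-independent) probability of choosing action r at the first visit to any state, let ρ = min{⟨d(μ_r), l⟩, ⟨d(μ_g), l⟩} > 0, and let α be the almost sure limit of (1/n) Σ_{i=1}^n 1(A_i = r). Then q·ρ ≤ α ≤ 1 − (1 − q)·ρ. -/

import Mathlib

open MeasureTheory ProbabilityTheory Filter Set
open scoped ENNReal BigOperators

/-- The two actions, "red" and "green". -/
inductive Act : Type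
  | r : Act
  | g : Act
deriving DecidableEq

instance : MeasurableSpace Act := ⊤

/-- Euclidean embedding of `ℤ²` into `ℝ²`. -/
def toR2 (x : ℤ × ℤ) : ℝ × ℝ := ((x.1 : ℝ), (x.2 : ℝ))

/-- The euclidean inner product on `ℝ²`. -/
def dot (u v : ℝ × ℝ) : ℝ := u.1 * v.1 + u.2 * v.2

/-- The drift (mean) of a measure on `ℤ²`. -/
noncomputable def drift (ν : Measure (ℤ × ℤ)) : ℝ × ℝ :=
  (∫ ξ, ((ξ.1 : ℝ)) ∂ν, ∫ ξ, ((ξ.2 : ℝ)) ∂ν)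

/-- The jump measure associated with each action. -/
def actM (μr μg : Measure (ℤ × ℤ)) : Act → Measure (ℤ × ℤ)
  | Act.r => μr
  | Act.g => μg

/-- The σ-algebra of the past `(X_0, A_0, …, A_{n−1}, X_n)` (actions strictly before `n`). -/
def pastX {Ω : Type*} (X : ℕ → Ω → ℤ × ℤ) (A : ℕ → Ω → Act) (n : ℕ) :
    MeasurableSpace Ω :=
  MeasurableSpace.comap
    (fun ω => (fun i : Fin (n + 1) => X i ω, fun i : Fin n => A i ω)) inferInstance

/-- The σ-algebra of the past `(X_0, A_0, …, X_n, A_n)` (including the action at time `n`). -/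
def pastA {Ω : Type*} (X : ℕ → Ω → ℤ × ℤ) (A : ℕ → Ω → Act) (n : ℕ) :
    MeasurableSpace Ω :=
  MeasurableSpace.comap
    (fun ω => (fun i : Fin (n + 1) => X i ω, fun i : Fin (n + 1) => A i ω)) inferInstance

/-- A Local Learning Process (LLP) in Model 2: a process `(X_n, A_n, β_n)` with decision
rule `φ` and update rule `ψ` such that `A_n ∼ φ(· | β_n(X_n, ·))` given the past,
`X_{n+1} − X_n ∼ μ_{A_n}` given the past, the environment is updated locally, the initial
environment is deterministic and state-invariant, and every action has positive
probability at a first visit. -/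
structure LLP2 (μr μg : Measure (ℤ × ℤ)) (Ω : Type*) [MeasurableSpace Ω]
    (μ : Measure Ω) where
  X : ℕ → Ω → ℤ × ℤ
  A : ℕ → Ω → Act
  β : ℕ → Ω → ℤ × ℤ → Act → ℝ
  φ : (Act → ℝ) → Act → ℝ
  ψ : (Act → ℝ) → (Act → ℝ) → ℤ × ℤ → Act → ℝ
  meas_X : ∀ n, Measurable (X n)
  meas_A : ∀ n, Measurable (A n)
  meas_β : ∀ n x a, Measurable fun ω => β n ω x a
  φ_nonneg : ∀ b a, 0 ≤ φ b a
  φ_sum : ∀ b, φ b Act.r + φ b Act.g = 1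
  β0_det : ∀ ω ω' x, β 0 ω x = β 0 ω' x
  β0_inv : ∀ ω x y, β 0 ω x = β 0 ω y
  φ0_pos : ∀ ω x a, 0 < φ (β 0 ω x) a
  update : ∀ n ω, β (n + 1) ω (X n ω) (A n ω) =
    ψ (β n ω (X n ω)) (β n ω (X (n + 1) ω)) (X (n + 1) ω - X n ω) (A n ω)
  update_frozen : ∀ n ω x a, (x, a) ≠ (X n ω, A n ω) → β (n + 1) ω x a = β n ω x a
  decision : ∀ n a (H : Set Ω), MeasurableSet[pastX X A n] H →
    (μ ({ω | A n ω = a} ∩ H)).toReal = ∫ ω in H, φ (β n ω (X n ω)) a ∂μ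
  transition : ∀ n (ξ : ℤ × ℤ) (H : Set Ω), MeasurableSet[pastA X A n] H →
    (μ ({ω | X (n + 1) ω - X n ω = ξ} ∩ H)).toReal
      = ∫ ω in H, ((actM μr μg (A n ω)) {ξ}).toReal ∂μ

namespace S12

lemma measAct (s : Set Act) : MeasurableSet s := MeasurableSpace.measurableSet_top

variable {μr μg : Measure (ℤ × ℤ)} {Ω : Type*} [MeasurableSpace Ω] {μ : Measure Ω}

lemma beta_frozen (L : LLP2 μr μg Ω μ) (n : ℕ) (ω : Ω) (x : ℤ × ℤ)
    (h : ∀ j < n, L.X j ω ≠ x) : L.β n ω x = L.β 0 ω x := by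
  induction n with
  | zero => rfl
  | succ n ih =>
    have h1 : L.β (n + 1) ω x = L.β n ω x := by
      funext a
      refine L.update_frozen n ω x a fun hc => ?_
      exact h n (Nat.lt_succ_self n) (congrArg Prod.fst hc).symm
    rw [h1]
    exact ih fun j hj => h j (hj.trans (Nat.lt_succ_self n))

lemma measX_le (L : LLP2 μr μg Ω μ) (n : ℕ) {s : Set Ω}
    (hs : MeasurableSet[pastX L.X L.A n] s) : MeasurableSet s := by
  obtain ⟨t, ht, rfl⟩ := hs
  have hf : Measurable (fun ω : Ω =>
      ((fun i : Fin (n + 1) => L.X i ω, fun i : Fin n => L.A i ω) :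
        (Fin (n + 1) → ℤ × ℤ) × (Fin n → Act))) :=
    (measurable_pi_lambda _ fun i : Fin (n + 1) => L.meas_X i).prodMk
      (measurable_pi_lambda _ fun i : Fin n => L.meas_A i)
  exact hf ht

/-- The "fresh" (first visit) event at time `n`. -/
def fresh (L : LLP2 μr μg Ω μ) (n : ℕ) : Set Ω := {ω | ∀ j < n, L.X j ω ≠ L.X n ω}

lemma fresh_pastX (L : LLP2 μr μg Ω μ) (n : ℕ) :
    MeasurableSet[pastX L.X L.A n] (fresh L n) := by
  refine ⟨{p | ∀ j : Fin n, p.1 j.castSucc ≠ p.1 (Fin.last n)}, ?_, ?_⟩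
  · rw [Set.setOf_forall]
    refine MeasurableSet.iInter fun j => ?_
    have hf : Measurable fun p : (Fin (n + 1) → ℤ × ℤ) × (Fin n → Act) =>
        p.1 j.castSucc := (measurable_pi_apply _).comp measurable_fst
    have hg : Measurable fun p : (Fin (n + 1) → ℤ × ℤ) × (Fin n → Act) =>
        p.1 (Fin.last n) := (measurable_pi_apply _).comp measurable_fst
    exact (measurableSet_eq_fun hf hg).compl
  · ext ω
    simp only [Set.mem_preimage, Set.mem_setOf_eq, fresh, Fin.coe_castSucc, Fin.val_last]
    constructor
    · intro h j hj; exact h ⟨j, hj⟩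
    · intro h j; exact h j j.isLt

lemma fresh_meas (L : LLP2 μr μg Ω μ) (n : ℕ) : MeasurableSet (fresh L n) :=
  measX_le L n (fresh_pastX L n)

lemma actEv_pastA (L : LLP2 μr μg Ω μ) (n : ℕ) (a : Act) :
    MeasurableSet[pastA L.X L.A n] {ω | L.A n ω = a} := by
  refine ⟨{p | p.2 (Fin.last n) = a}, ?_, ?_⟩
  · have hf : Measurable fun p : (Fin (n + 1) → ℤ × ℤ) × (Fin (n + 1) → Act) =>
        p.2 (Fin.last n) := (measurable_pi_apply _).comp measurable_snd
    exact hf (measAct {a})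
  · ext ω; simp [Fin.val_last]

lemma actEv_meas (L : LLP2 μr μg Ω μ) (n : ℕ) (a : Act) :
    MeasurableSet {ω | L.A n ω = a} :=
  (L.meas_A n) (measAct {a})

end S12
namespace S12

variable {μr μg : Measure (ℤ × ℤ)} {Ω : Type*} [MeasurableSpace Ω] {μ : Measure Ω}

lemma decision_fresh (L : LLP2 μr μg Ω μ) (n : ℕ) (a : Act) (q' : ℝ)
    (hq' : ∀ ω x, L.φ (L.β 0 ω x) a = q') :
    (μ ({ω | L.A n ω = a} ∩ fresh L n)).toReal = q' * (μ (fresh L n)).toReal := by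
  rw [L.decision n a _ (fresh_pastX L n)]
  rw [setIntegral_congr_fun (fresh_meas L n)
    (fun ω hω => by show L.φ (L.β n ω (L.X n ω)) a = q'; rw [beta_frozen L n ω (L.X n ω) hω, hq'] :
      Set.EqOn (fun ω => L.φ (L.β n ω (L.X n ω)) a) (fun _ => q') (fresh L n))]
  rw [setIntegral_const, smul_eq_mul, mul_comm]
  rfl

lemma actEv_compl (L : LLP2 μr μg Ω μ) (n : ℕ) :
    {ω | L.A n ω = Act.g} = {ω | L.A n ω = Act.r}ᶜ := by
  ext ω
  simp only [Set.mem_setOf_eq, Set.mem_compl_iff]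
  cases h : L.A n ω <;> simp

lemma prob_action_sum (L : LLP2 μr μg Ω μ) [IsProbabilityMeasure μ] (n : ℕ) :
    (μ {ω | L.A n ω = Act.r}).toReal + (μ {ω | L.A n ω = Act.g}).toReal = 1 := by
  rw [actEv_compl, ← ENNReal.toReal_add (measure_ne_top _ _) (measure_ne_top _ _),
    measure_add_measure_compl (actEv_meas L n Act.r), measure_univ, ENNReal.toReal_one]

lemma jump_meas (L : LLP2 μr μg Ω μ) (n : ℕ) :
    Measurable (fun ω => L.X (n + 1) ω - L.X n ω) :=
  (measurable_of_countable (fun p : (ℤ × ℤ) × (ℤ × ℤ) => p.1 - p.2)).comp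
    ((L.meas_X (n + 1)).prodMk (L.meas_X n))

lemma jumpEv_meas (L : LLP2 μr μg Ω μ) (n : ℕ) (ξ : ℤ × ℤ) :
    MeasurableSet {ω | L.X (n + 1) ω - L.X n ω = ξ} :=
  (jump_meas L n) (measurableSet_singleton ξ)

lemma prob_jump (L : LLP2 μr μg Ω μ) [IsProbabilityMeasure μ] (n : ℕ) (ξ : ℤ × ℤ) :
    (μ {ω | L.X (n + 1) ω - L.X n ω = ξ}).toReal
      = (μr {ξ}).toReal * (μ {ω | L.A n ω = Act.r}).toReal
      + (μg {ξ}).toReal * (μ {ω | L.A n ω = Act.g}).toReal := by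
  have h1 : ∀ a : Act, (μ ({ω | L.X (n + 1) ω - L.X n ω = ξ} ∩ {ω | L.A n ω = a})).toReal
      = ((actM μr μg a) {ξ}).toReal * (μ {ω | L.A n ω = a}).toReal := by
    intro a
    rw [L.transition n ξ _ (actEv_pastA L n a)]
    rw [setIntegral_congr_fun (actEv_meas L n a)
      (fun ω hω => by show ((actM μr μg (L.A n ω)) {ξ}).toReal = _; rw [Set.mem_setOf_eq] at hω; rw [hω] :
        Set.EqOn (fun ω => ((actM μr μg (L.A n ω)) {ξ}).toReal)
          (fun _ => ((actM μr μg a) {ξ}).toReal) {ω | L.A n ω = a})]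
    rw [setIntegral_const, smul_eq_mul, mul_comm]
    rfl
  have hsplit : {ω | L.X (n + 1) ω - L.X n ω = ξ}
      = ({ω | L.X (n + 1) ω - L.X n ω = ξ} ∩ {ω | L.A n ω = Act.r})
        ∪ ({ω | L.X (n + 1) ω - L.X n ω = ξ} ∩ {ω | L.A n ω = Act.g}) := by
    rw [actEv_compl, Set.inter_union_compl]
  have hd : Disjoint ({ω | L.X (n + 1) ω - L.X n ω = ξ} ∩ {ω | L.A n ω = Act.r})
      ({ω | L.X (n + 1) ω - L.X n ω = ξ} ∩ {ω | L.A n ω = Act.g}) := by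
    rw [actEv_compl]
    exact Set.disjoint_of_subset Set.inter_subset_right Set.inter_subset_right
      disjoint_compl_right
  rw [hsplit, measure_union hd ((jumpEv_meas L n ξ).inter (actEv_meas L n Act.g)),
    ENNReal.toReal_add (measure_ne_top _ _) (measure_ne_top _ _), h1 Act.r, h1 Act.g]
  rfl

end S12
namespace S12

/-- The support set `{e₁, -e₁, e₂, -e₂}`. -/
def Sset : Set (ℤ × ℤ) := {(1, 0), (-1, 0), (0, 1), (0, -1)}

variable {μr μg : Measure (ℤ × ℤ)} {Ω : Type*} [MeasurableSpace Ω] {μ : Measure Ω}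

lemma jump_in_S (L : LLP2 μr μg Ω μ) [IsProbabilityMeasure μ]
    (hsupp : ∀ a, (actM μr μg a) (Sset : Set (ℤ × ℤ))ᶜ = 0) :
    ∀ᵐ ω ∂μ, ∀ n, L.X (n + 1) ω - L.X n ω ∈ Sset := by
  rw [ae_all_iff]
  intro n
  have h0 : ∀ ξ ∉ Sset, μ {ω | L.X (n + 1) ω - L.X n ω = ξ} = 0 := by
    intro ξ hξ
    have hz : ∀ a : Act, ((actM μr μg a) {ξ}).toReal = 0 := by
      intro a
      have hz0 : (actM μr μg a) {ξ} = 0 :=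
        measure_mono_null (fun y hy => by
          rw [Set.mem_singleton_iff.1 hy]; exact hξ) (hsupp a)
      rw [hz0]; rfl
    have := prob_jump L n ξ
    rw [show (μr {ξ}).toReal = 0 from hz Act.r,
      show (μg {ξ}).toReal = 0 from hz Act.g] at this
    simp only [zero_mul, add_zero] at this
    exact (ENNReal.toReal_eq_zero_iff _).1 this |>.resolve_right (measure_ne_top _ _)
  have : {ω | ¬ L.X (n + 1) ω - L.X n ω ∈ Sset}
      ⊆ ⋃ ξ ∈ (Sset : Set (ℤ × ℤ))ᶜ, {ω | L.X (n + 1) ω - L.X n ω = ξ} := by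
    intro ω hω
    exact Set.mem_biUnion hω rfl
  refine measure_mono_null this ?_
  exact (measure_biUnion_null_iff (Set.to_countable _)).2 fun ξ hξ => h0 ξ hξ

lemma drift_dot (ν : Measure (ℤ × ℤ)) [IsProbabilityMeasure ν]
    (hν : ν (Sset : Set (ℤ × ℤ))ᶜ = 0) (l : ℝ × ℝ) :
    dot (drift ν) l
      = ((ν {((1 : ℤ), (0 : ℤ))}).toReal - (ν {((-1 : ℤ), (0 : ℤ))}).toReal) * l.1
      + ((ν {((0 : ℤ), (1 : ℤ))}).toReal - (ν {((0 : ℤ), (-1 : ℤ))}).toReal) * l.2 := by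
  have hae : ∀ᵐ ξ ∂ν, ξ ∈ Sset := hν
  have h1 : ∫ ξ : ℤ × ℤ, ((ξ.1 : ℝ)) ∂ν
      = (ν {((1 : ℤ), (0 : ℤ))}).toReal - (ν {((-1 : ℤ), (0 : ℤ))}).toReal := by
    have heq : (fun ξ : ℤ × ℤ => ((ξ.1 : ℝ)))
        =ᵐ[ν] fun ξ => ({((1 : ℤ), (0 : ℤ))} : Set (ℤ × ℤ)).indicator (fun _ => (1 : ℝ)) ξ
          - ({((-1 : ℤ), (0 : ℤ))} : Set (ℤ × ℤ)).indicator (fun _ => (1 : ℝ)) ξ := by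
      filter_upwards [hae] with ξ hξ
      rcases hξ with h | h | h | h <;> subst h <;>
        norm_num [Set.indicator, Prod.ext_iff]
    rw [integral_congr_ae heq, integral_sub
      ((integrable_const (1 : ℝ)).indicator (measurableSet_singleton _))
      ((integrable_const (1 : ℝ)).indicator (measurableSet_singleton _)),
      integral_indicator_const _ (measurableSet_singleton _),
      integral_indicator_const _ (measurableSet_singleton _)]
    simp
    rfl
  have h2 : ∫ ξ : ℤ × ℤ, ((ξ.2 : ℝ)) ∂ν
      = (ν {((0 : ℤ), (1 : ℤ))}).toReal - (ν {((0 : ℤ), (-1 : ℤ))}).toReal := by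
    have heq : (fun ξ : ℤ × ℤ => ((ξ.2 : ℝ)))
        =ᵐ[ν] fun ξ => ({((0 : ℤ), (1 : ℤ))} : Set (ℤ × ℤ)).indicator (fun _ => (1 : ℝ)) ξ
          - ({((0 : ℤ), (-1 : ℤ))} : Set (ℤ × ℤ)).indicator (fun _ => (1 : ℝ)) ξ := by
      filter_upwards [hae] with ξ hξ
      rcases hξ with h | h | h | h <;> subst h <;>
        norm_num [Set.indicator, Prod.ext_iff]
    rw [integral_congr_ae heq, integral_sub
      ((integrable_const (1 : ℝ)).indicator (measurableSet_singleton _))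
      ((integrable_const (1 : ℝ)).indicator (measurableSet_singleton _)),
      integral_indicator_const _ (measurableSet_singleton _),
      integral_indicator_const _ (measurableSet_singleton _)]
    simp
    rfl
  show (∫ ξ : ℤ × ℤ, ((ξ.1 : ℝ)) ∂ν) * l.1 + (∫ ξ : ℤ × ℤ, ((ξ.2 : ℝ)) ∂ν) * l.2 = _
  rw [h1, h2]

end S12
namespace S12

lemma dot_toR2_sub (x y : ℤ × ℤ) (l : ℝ × ℝ) :
    dot (toR2 (x - y)) l = dot (toR2 x) l - dot (toR2 y) l := by
  simp only [dot, toR2, Prod.fst_sub, Prod.snd_sub]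
  push_cast
  ring

variable {μr μg : Measure (ℤ × ℤ)} {Ω : Type*} [MeasurableSpace Ω] {μ : Measure Ω}

lemma exp_jump (L : LLP2 μr μg Ω μ) [IsProbabilityMeasure μ]
    [IsProbabilityMeasure μr] [IsProbabilityMeasure μg]
    (hsupp : ∀ a, (actM μr μg a) (Sset : Set (ℤ × ℤ))ᶜ = 0) (l : ℝ × ℝ) (i : ℕ) :
    Integrable (fun ω => dot (toR2 (L.X (i + 1) ω - L.X i ω)) l) μ ∧
    ∫ ω, dot (toR2 (L.X (i + 1) ω - L.X i ω)) l ∂μ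
      = (μ {ω | L.A i ω = Act.r}).toReal * dot (drift μr) l
      + (μ {ω | L.A i ω = Act.g}).toReal * dot (drift μg) l := by
  set J : ℤ × ℤ → Set Ω := fun s => {ω | L.X (i + 1) ω - L.X i ω = s} with hJ
  set h : Ω → ℝ := fun ω =>
    (J (1, 0)).indicator (fun _ => l.1) ω + (J (-1, 0)).indicator (fun _ => -l.1) ω
    + (J (0, 1)).indicator (fun _ => l.2) ω + (J (0, -1)).indicator (fun _ => -l.2) ω
    with hh
  have hae : ∀ᵐ ω ∂μ, L.X (i + 1) ω - L.X i ω ∈ Sset := by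
    filter_upwards [jump_in_S L hsupp] with ω hω using hω i
  have heq : (fun ω => dot (toR2 (L.X (i + 1) ω - L.X i ω)) l) =ᵐ[μ] h := by
    filter_upwards [hae] with ω hω
    simp only [Sset, Set.mem_insert_iff, Set.mem_singleton_iff] at hω
    rcases hω with hc | hc | hc | hc <;>
    · have h1 := congrArg Prod.fst hc
      have h2 := congrArg Prod.snd hc
      simp only [Prod.fst_sub, Prod.snd_sub] at h1 h2
      norm_num [hh, hJ, Set.indicator_apply, Set.mem_setOf_eq, hc, Prod.ext_iff,
        dot, toR2, h1, h2]
  have hI : ∀ (s : ℤ × ℤ) (c : ℝ), Integrable ((J s).indicator (fun _ => c)) μ :=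
    fun s c => (integrable_const c).indicator (jumpEv_meas L i s)
  have hInth : Integrable h μ := by
    exact (((hI _ _).add (hI _ _)).add (hI _ _)).add (hI _ _)
  have hint : ∫ ω, h ω ∂μ
      = (μ (J (1, 0))).toReal * l.1 + (μ (J (-1, 0))).toReal * (-l.1)
      + (μ (J (0, 1))).toReal * l.2 + (μ (J (0, -1))).toReal * (-l.2) := by
    have hI2 : Integrable (fun ω => (J (1, 0)).indicator (fun _ => l.1) ω
        + (J (-1, 0)).indicator (fun _ => -l.1) ω) μ := (hI _ _).add (hI _ _)
    have hI3 : Integrable (fun ω => (J (1, 0)).indicator (fun _ => l.1) ω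
        + (J (-1, 0)).indicator (fun _ => -l.1) ω
        + (J (0, 1)).indicator (fun _ => l.2) ω) μ := hI2.add (hI _ _)
    rw [hh]
    beta_reduce
    rw [integral_add hI3 (hI _ _), integral_add hI2 (hI _ _),
      integral_add (hI _ _) (hI _ _),
      integral_indicator_const _ (jumpEv_meas L i _),
      integral_indicator_const _ (jumpEv_meas L i _),
      integral_indicator_const _ (jumpEv_meas L i _),
      integral_indicator_const _ (jumpEv_meas L i _)]
    simp [smul_eq_mul]
    rfl
  constructor
  · exact hInth.congr heq.symm
  · rw [integral_congr_ae heq, hint, hJ]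
    simp only [prob_jump L i]
    rw [drift_dot μr (hsupp Act.r) l, drift_dot μg (hsupp Act.g) l]
    ring

end S12
namespace S12

variable {μr μg : Measure (ℤ × ℤ)} {Ω : Type*} [MeasurableSpace Ω] {μ : Measure Ω}

lemma record (L : LLP2 μr μg Ω μ) (l : ℝ × ℝ) (hl1 : |l.1| ≤ 1) (hl2 : |l.2| ≤ 1)
    (ω : Ω) (hS : ∀ i, L.X (i + 1) ω - L.X i ω ∈ Sset) (n : ℕ) :
    dot (toR2 (L.X n ω)) l - dot (toR2 (L.X 0 ω)) l
      ≤ ∑ i ∈ Finset.Icc 1 n, (fresh L i).indicator (fun _ => (1 : ℝ)) ω := by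
  have hstep : ∀ m : ℕ, dot (toR2 (L.X (m + 1) ω)) l
      = dot (toR2 (L.X m ω)) l + dot (toR2 (L.X (m + 1) ω - L.X m ω)) l := by
    intro m
    rw [dot_toR2_sub]
    ring
  have hbound : ∀ m : ℕ, dot (toR2 (L.X (m + 1) ω - L.X m ω)) l ≤ 1 := by
    intro m
    have hm := hS m
    simp only [Sset, Set.mem_insert_iff, Set.mem_singleton_iff] at hm
    rcases hm with hc | hc | hc | hc <;> rw [hc] <;>
      (simp only [dot, toR2]; push_cast;
        linarith [(abs_le.1 hl1).1, (abs_le.1 hl1).2, (abs_le.1 hl2).1, (abs_le.1 hl2).2])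
  suffices h : ∀ m : ℕ, ∀ j ≤ m, dot (toR2 (L.X j ω)) l ≤ dot (toR2 (L.X 0 ω)) l
      + ∑ i ∈ Finset.Icc 1 m, (fresh L i).indicator (fun _ => (1 : ℝ)) ω by
    linarith [h n n le_rfl]
  intro m
  induction m with
  | zero =>
    intro j hj
    rw [Nat.le_zero] at hj
    subst hj
    simp
  | succ m ih =>
    have hsum : ∑ i ∈ Finset.Icc 1 (m + 1), (fresh L i).indicator (fun _ => (1 : ℝ)) ω
        = (∑ i ∈ Finset.Icc 1 m, (fresh L i).indicator (fun _ => (1 : ℝ)) ω)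
          + (fresh L (m + 1)).indicator (fun _ => (1 : ℝ)) ω := by
      rw [← Finset.sum_Icc_succ_top (Nat.succ_le_succ (Nat.zero_le m))]
    have hind0 : (0 : ℝ) ≤ (fresh L (m + 1)).indicator (fun _ => (1 : ℝ)) ω :=
      Set.indicator_apply_nonneg fun _ => zero_le_one
    intro j hj
    by_cases hjm : j ≤ m
    · have := ih j hjm
      rw [hsum]
      linarith
    · have hje : j = m + 1 := le_antisymm hj (Nat.succ_le_of_lt (Nat.lt_of_not_le hjm))
      subst hje
      by_cases hf : ω ∈ fresh L (m + 1)
      · have h1 : (fresh L (m + 1)).indicator (fun _ => (1 : ℝ)) ω = 1 :=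
          Set.indicator_of_mem hf _
        have := ih m le_rfl
        rw [hsum, h1, hstep m]
        linarith [hbound m]
      · simp only [fresh, Set.mem_setOf_eq] at hf
        push_neg at hf
        obtain ⟨k, hk, hkeq⟩ := hf
        have := ih k (Nat.lt_succ_iff.1 hk)
        rw [hsum, ← hkeq]
        linarith

end S12
namespace S12

variable {μr μg : Measure (ℤ × ℤ)} {Ω : Type*} [MeasurableSpace Ω] {μ : Measure Ω}

lemma sum_fresh_ge (L : LLP2 μr μg Ω μ) [IsProbabilityMeasure μ]
    [IsProbabilityMeasure μr] [IsProbabilityMeasure μg]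
    (hsupp : ∀ a, (actM μr μg a) (Sset : Set (ℤ × ℤ))ᶜ = 0)
    (l : ℝ × ℝ) (hl : dot l l = 1) (ρ : ℝ)
    (hρr : ρ ≤ dot (drift μr) l) (hρg : ρ ≤ dot (drift μg) l) (n : ℕ) :
    (n : ℝ) * ρ ≤ ∑ i ∈ Finset.Icc 1 n, (μ (fresh L i)).toReal := by
  have hl' : l.1 * l.1 + l.2 * l.2 = 1 := hl
  have hl1 : |l.1| ≤ 1 := by
    rw [abs_le]
    constructor <;> nlinarith [mul_self_nonneg l.2, mul_self_nonneg (l.1 - 1),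
      mul_self_nonneg (l.1 + 1)]
  have hl2 : |l.2| ≤ 1 := by
    rw [abs_le]
    constructor <;> nlinarith [mul_self_nonneg l.1, mul_self_nonneg (l.2 - 1),
      mul_self_nonneg (l.2 + 1)]
  -- the expected jump in direction l is at least ρ
  have hjump : ∀ i : ℕ,
      ρ ≤ ∫ ω, dot (toR2 (L.X (i + 1) ω - L.X i ω)) l ∂μ := by
    intro i
    rw [(exp_jump L hsupp l i).2]
    have h1 : (0 : ℝ) ≤ (μ {ω | L.A i ω = Act.r}).toReal := ENNReal.toReal_nonneg
    have h2 : (0 : ℝ) ≤ (μ {ω | L.A i ω = Act.g}).toReal := ENNReal.toReal_nonneg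
    have h3 := prob_action_sum L i
    have h4 : (μ {ω | L.A i ω = Act.r}).toReal * ρ
        + (μ {ω | L.A i ω = Act.g}).toReal * ρ = ρ := by
      rw [← add_mul, h3, one_mul]
    linarith [mul_le_mul_of_nonneg_left hρr h1, mul_le_mul_of_nonneg_left hρg h2]
  -- integrability of the indicator sum
  have hIind : ∀ i : ℕ, Integrable ((fresh L i).indicator (fun _ => (1 : ℝ))) μ :=
    fun i => (integrable_const (1 : ℝ)).indicator (fresh_meas L i)
  have hIF : Integrable (fun ω => ∑ i ∈ Finset.Icc 1 n,
      (fresh L i).indicator (fun _ => (1 : ℝ)) ω) μ :=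
    integrable_finset_sum _ fun i _ => hIind i
  have hIG : Integrable (fun ω => ∑ i ∈ Finset.range n,
      dot (toR2 (L.X (i + 1) ω - L.X i ω)) l) μ :=
    integrable_finset_sum _ fun i _ => (exp_jump L hsupp l i).1
  -- pathwise comparison, a.e.
  have hae : ∀ᵐ ω ∂μ, (∑ i ∈ Finset.range n, dot (toR2 (L.X (i + 1) ω - L.X i ω)) l)
      ≤ ∑ i ∈ Finset.Icc 1 n, (fresh L i).indicator (fun _ => (1 : ℝ)) ω := by
    filter_upwards [jump_in_S L hsupp] with ω hω
    have htel : ∑ i ∈ Finset.range n, dot (toR2 (L.X (i + 1) ω - L.X i ω)) l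
        = dot (toR2 (L.X n ω)) l - dot (toR2 (L.X 0 ω)) l := by
      have : ∀ i ∈ Finset.range n, dot (toR2 (L.X (i + 1) ω - L.X i ω)) l
          = dot (toR2 (L.X (i + 1) ω)) l - dot (toR2 (L.X i ω)) l := by
        intro i _
        rw [dot_toR2_sub]
      rw [Finset.sum_congr rfl this,
        Finset.sum_range_sub (fun i => dot (toR2 (L.X i ω)) l) n]
    rw [htel]
    exact record L l hl1 hl2 ω hω n
  -- expectation of the indicator sum
  have hEF : ∫ ω, (∑ i ∈ Finset.Icc 1 n, (fresh L i).indicator (fun _ => (1 : ℝ)) ω) ∂μ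
      = ∑ i ∈ Finset.Icc 1 n, (μ (fresh L i)).toReal := by
    rw [integral_finset_sum _ fun i _ => hIind i]
    refine Finset.sum_congr rfl fun i _ => ?_
    rw [integral_indicator_const _ (fresh_meas L i), smul_eq_mul, mul_one]
    rfl
  calc (n : ℝ) * ρ = ∑ _i ∈ Finset.range n, ρ := by
        rw [Finset.sum_const, Finset.card_range, nsmul_eq_mul]
    _ ≤ ∑ i ∈ Finset.range n, ∫ ω, dot (toR2 (L.X (i + 1) ω - L.X i ω)) l ∂μ :=
        Finset.sum_le_sum fun i _ => hjump i
    _ = ∫ ω, (∑ i ∈ Finset.range n, dot (toR2 (L.X (i + 1) ω - L.X i ω)) l) ∂μ :=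
        (integral_finset_sum _ fun i _ => (exp_jump L hsupp l i).1).symm
    _ ≤ ∫ ω, (∑ i ∈ Finset.Icc 1 n, (fresh L i).indicator (fun _ => (1 : ℝ)) ω) ∂μ :=
        integral_mono_ae hIG hIF hae
    _ = ∑ i ∈ Finset.Icc 1 n, (μ (fresh L i)).toReal := hEF

end S12
open S12 in
/-- for an LLP in Model 2 with jumps supported on `{±e_1, ±e_2}`,
first-visit probability `q` of action `r`, and a.s. action frequency `α`, one has
`q·ρ ≤ α ≤ 1 − (1 − q)·ρ`. -/
theorem statement12
    (μr μg : Measure (ℤ × ℤ)) [IsProbabilityMeasure μr] [IsProbabilityMeasure μg]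
    (c : ℝ) (hc : 0 < c)
    (hexp : ∀ a, Integrable
      (fun ξ : ℤ × ℤ => Real.exp (c * ((|ξ.1| : ℝ) + (|ξ.2| : ℝ)))) (actM μr μg a))
    (l : ℝ × ℝ) (hl : dot l l = 1)
    (ρ : ℝ) (hρdef : ρ = min (dot (drift μr) l) (dot (drift μg) l)) (hρpos : 0 < ρ)
    {Ω : Type*} [MeasurableSpace Ω] (μ : Measure Ω) [IsProbabilityMeasure μ]
    (L : LLP2 μr μg Ω μ)
    (hsupp : ∀ a, (actM μr μg a)
      ({(1, 0), (-1, 0), (0, 1), (0, -1)} : Set (ℤ × ℤ))ᶜ = 0)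
    (q : ℝ) (hq : ∀ ω x, L.φ (L.β 0 ω x) Act.r = q)
    (α : ℝ)
    (hα : ∀ᵐ ω ∂μ, Tendsto
      (fun n : ℕ => (n : ℝ)⁻¹ *
        ∑ i ∈ Finset.Icc 1 n, (if L.A i ω = Act.r then (1 : ℝ) else 0))
      atTop (nhds α)) :
    q * ρ ≤ α ∧ α ≤ 1 - (1 - q) * ρ := by
  classical
  have hsupp' : ∀ a, (actM μr μg a) (Sset : Set (ℤ × ℤ))ᶜ = 0 := hsupp
  -- basic facts about q
  have hne : Nonempty Ω := by
    by_contra h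
    rw [not_nonempty_iff] at h
    have h1 : μ Set.univ = 0 := by
      rw [Set.univ_eq_empty_iff.2 h, measure_empty]
    rw [measure_univ] at h1
    exact one_ne_zero h1
  obtain ⟨ω0⟩ := hne
  have hq0 : 0 ≤ q := by
    rw [← hq ω0 (0, 0)]
    exact L.φ_nonneg _ _
  have hqg : ∀ ω x, L.φ (L.β 0 ω x) Act.g = 1 - q := by
    intro ω x
    have := L.φ_sum (L.β 0 ω x)
    rw [hq ω x] at this
    linarith
  have hq1 : q ≤ 1 := by
    have := L.φ_nonneg (L.β 0 ω0 (0, 0)) Act.g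
    rw [hqg ω0 (0, 0)] at this
    linarith
  have hρr : ρ ≤ dot (drift μr) l := hρdef ▸ min_le_left _ _
  have hρg : ρ ≤ dot (drift μg) l := hρdef ▸ min_le_right _ _
  -- the key per-time bounds on P(A_i = r)
  have key_lo : ∀ i : ℕ, q * (μ (fresh L i)).toReal
      ≤ (μ {ω | L.A i ω = Act.r}).toReal := by
    intro i
    rw [← decision_fresh L i Act.r q hq]
    exact ENNReal.toReal_mono (measure_ne_top μ _) (measure_mono Set.inter_subset_left)
  have key_hi : ∀ i : ℕ, (μ {ω | L.A i ω = Act.r}).toReal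
      ≤ 1 - (1 - q) * (μ (fresh L i)).toReal := by
    intro i
    have h1 : (1 - q) * (μ (fresh L i)).toReal ≤ (μ {ω | L.A i ω = Act.g}).toReal := by
      rw [← decision_fresh L i Act.g (1 - q) hqg]
      exact ENNReal.toReal_mono (measure_ne_top μ _) (measure_mono Set.inter_subset_left)
    have h2 := prob_action_sum L i
    linarith
  -- rewriting the time-average as a measurable indicator sum
  have hifind : ∀ i : ℕ, (fun ω => if L.A i ω = Act.r then (1 : ℝ) else 0)
      = fun ω => ({ω | L.A i ω = Act.r}).indicator (fun _ => (1 : ℝ)) ω := by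
    intro i
    funext ω
    simp [Set.indicator_apply, Set.mem_setOf_eq]
  have hIind : ∀ i : ℕ,
      Integrable (fun ω => if L.A i ω = Act.r then (1 : ℝ) else 0) μ := by
    intro i
    rw [hifind i]
    exact (integrable_const (1 : ℝ)).indicator (actEv_meas L i Act.r)
  have hint : ∀ n : ℕ, ∫ ω, ((n : ℝ)⁻¹ *
      ∑ i ∈ Finset.Icc 1 n, (if L.A i ω = Act.r then (1 : ℝ) else 0)) ∂μ
      = (n : ℝ)⁻¹ * ∑ i ∈ Finset.Icc 1 n, (μ {ω | L.A i ω = Act.r}).toReal := by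
    intro n
    rw [integral_const_mul, integral_finset_sum _ fun i _ => hIind i]
    congr 1
    refine Finset.sum_congr rfl fun i _ => ?_
    rw [hifind i, integral_indicator_const _ (actEv_meas L i Act.r), smul_eq_mul, mul_one]
    rfl
  -- the fresh-mass lower bound
  have hfresh : ∀ n : ℕ, (n : ℝ) * ρ ≤ ∑ i ∈ Finset.Icc 1 n, (μ (fresh L i)).toReal :=
    fun n => sum_fresh_ge L hsupp' l hl ρ hρr hρg n
  -- bounds on the expected time-average, for n ≥ 1
  have hEbounds : ∀ n : ℕ, 1 ≤ n →
      q * ρ ≤ (n : ℝ)⁻¹ * ∑ i ∈ Finset.Icc 1 n, (μ {ω | L.A i ω = Act.r}).toReal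
      ∧ (n : ℝ)⁻¹ * ∑ i ∈ Finset.Icc 1 n, (μ {ω | L.A i ω = Act.r}).toReal
        ≤ 1 - (1 - q) * ρ := by
    intro n hn
    have hn0 : (0 : ℝ) < (n : ℝ) := by exact_mod_cast Nat.lt_of_lt_of_le Nat.zero_lt_one hn
    have hinv : (0 : ℝ) ≤ (n : ℝ)⁻¹ := by positivity
    have hcard : ((Finset.Icc 1 n).card : ℝ) = (n : ℝ) := by
      rw [Nat.card_Icc]
      push_cast
      ring
    constructor
    · have h1 : q * ((n : ℝ) * ρ) ≤ ∑ i ∈ Finset.Icc 1 n, (μ {ω | L.A i ω = Act.r}).toReal := by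
        calc q * ((n : ℝ) * ρ) ≤ q * ∑ i ∈ Finset.Icc 1 n, (μ (fresh L i)).toReal :=
              mul_le_mul_of_nonneg_left (hfresh n) hq0
          _ = ∑ i ∈ Finset.Icc 1 n, q * (μ (fresh L i)).toReal := Finset.mul_sum _ _ _
          _ ≤ _ := Finset.sum_le_sum fun i _ => key_lo i
      calc q * ρ = (n : ℝ)⁻¹ * (q * ((n : ℝ) * ρ)) := by
            field_simp
          _ ≤ _ := mul_le_mul_of_nonneg_left h1 hinv
    · have h1 : ∑ i ∈ Finset.Icc 1 n, (μ {ω | L.A i ω = Act.r}).toReal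
          ≤ (n : ℝ) * (1 - (1 - q) * ρ) := by
        calc ∑ i ∈ Finset.Icc 1 n, (μ {ω | L.A i ω = Act.r}).toReal
            ≤ ∑ i ∈ Finset.Icc 1 n, (1 - (1 - q) * (μ (fresh L i)).toReal) :=
              Finset.sum_le_sum fun i _ => key_hi i
          _ = (n : ℝ) - (1 - q) * ∑ i ∈ Finset.Icc 1 n, (μ (fresh L i)).toReal := by
              rw [Finset.sum_sub_distrib, Finset.sum_const, ← Finset.mul_sum]
              rw [nsmul_eq_mul, hcard]
              ring
          _ ≤ (n : ℝ) - (1 - q) * ((n : ℝ) * ρ) := by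
              have := mul_le_mul_of_nonneg_left (hfresh n) (by linarith : (0:ℝ) ≤ 1 - q)
              linarith
          _ = (n : ℝ) * (1 - (1 - q) * ρ) := by ring
      calc (n : ℝ)⁻¹ * ∑ i ∈ Finset.Icc 1 n, (μ {ω | L.A i ω = Act.r}).toReal
          ≤ (n : ℝ)⁻¹ * ((n : ℝ) * (1 - (1 - q) * ρ)) := mul_le_mul_of_nonneg_left h1 hinv
        _ = 1 - (1 - q) * ρ := by field_simp
  -- dominated convergence
  have hmeasf : ∀ n : ℕ, AEStronglyMeasurable (fun ω => (n : ℝ)⁻¹ *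
      ∑ i ∈ Finset.Icc 1 n, (if L.A i ω = Act.r then (1 : ℝ) else 0)) μ := by
    intro n
    refine (Measurable.const_mul ?_ _).aestronglyMeasurable
    refine Finset.measurable_sum _ fun i _ => ?_
    exact Measurable.ite (actEv_meas L i Act.r) measurable_const measurable_const
  have hbdd : ∀ n : ℕ, ∀ᵐ ω ∂μ, ‖(n : ℝ)⁻¹ *
      ∑ i ∈ Finset.Icc 1 n, (if L.A i ω = Act.r then (1 : ℝ) else 0)‖ ≤ 1 := by
    intro n
    refine Filter.Eventually.of_forall fun ω => ?_
    have h0 : (0 : ℝ) ≤ ∑ i ∈ Finset.Icc 1 n, (if L.A i ω = Act.r then (1 : ℝ) else 0) :=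
      Finset.sum_nonneg fun i _ => by positivity
    have h1 : ∑ i ∈ Finset.Icc 1 n, (if L.A i ω = Act.r then (1 : ℝ) else 0) ≤ (n : ℝ) := by
      calc ∑ i ∈ Finset.Icc 1 n, (if L.A i ω = Act.r then (1 : ℝ) else 0)
          ≤ ∑ _i ∈ Finset.Icc 1 n, (1 : ℝ) :=
            Finset.sum_le_sum fun i _ => by split <;> norm_num
        _ = (n : ℝ) := by rw [Finset.sum_const, nsmul_eq_mul, mul_one, Nat.card_Icc]
                          push_cast; ring
    have hinv : (0 : ℝ) ≤ (n : ℝ)⁻¹ := by positivity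
    have hmul : (n : ℝ)⁻¹ * (n : ℝ) ≤ 1 := by
      rcases Nat.eq_zero_or_pos n with h | h
      · simp [h]
      · have hne' : ((n : ℝ)) ≠ 0 := by positivity
        rw [inv_mul_cancel₀ hne']
    rw [Real.norm_eq_abs, abs_of_nonneg (by positivity)]
    calc (n : ℝ)⁻¹ * ∑ i ∈ Finset.Icc 1 n, (if L.A i ω = Act.r then (1 : ℝ) else 0)
        ≤ (n : ℝ)⁻¹ * (n : ℝ) := mul_le_mul_of_nonneg_left h1 hinv
      _ ≤ 1 := hmul
  have hlim : Tendsto (fun n : ℕ => ∫ ω, ((n : ℝ)⁻¹ *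
      ∑ i ∈ Finset.Icc 1 n, (if L.A i ω = Act.r then (1 : ℝ) else 0)) ∂μ)
      atTop (nhds α) := by
    have := MeasureTheory.tendsto_integral_of_dominated_convergence
      (F := fun n ω => (n : ℝ)⁻¹ *
        ∑ i ∈ Finset.Icc 1 n, (if L.A i ω = Act.r then (1 : ℝ) else 0))
      (f := fun _ => α) (bound := fun _ => (1 : ℝ)) hmeasf (integrable_const 1) hbdd hα
    simpa [integral_const, measure_univ] using this
  constructor
  · refine ge_of_tendsto hlim ?_
    rw [eventually_atTop]
    exact ⟨1, fun n hn => by rw [hint n]; exact (hEbounds n hn).1⟩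
  · refine le_of_tendsto hlim ?_
    rw [eventually_atTop]
    exact ⟨1, fun n hn => by rw [hint n]; exact (hEbounds n hn).2⟩
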